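/- (Identity for the truncated V-fractional Taylor remainder.) Let 0 < a ≤ b, let n ≥ −1 be an integer, and let f : (0,∞) → ℝ be (n+1) times α-differentiable with D_α^{n+1} f continuous on (0,∞). Then for every t ∈ [a,b]: ∫_a^b (D_α^{n+1} f(s)/(n+1)!)·((t^α − s^α)/(λα))^{n+1} dωs = ∫_a^t R_{n,f}(a,s) dωs + ∫_t^b R_{n,f}(b,s) dωs. -/

import Mathlib

open Real Set MeasureTheory Filter

noncomputable def poch (x y : ℝ) : ℝ := Real.Gamma (x + y) / Real.Gamma x

noncomputable def vlam (γ β ρ δ p q : ℝ) : ℝ :=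
  (Real.Gamma β * poch ρ q) / (Real.Gamma (γ + β) * poch δ p)

/-- Truncated V-fractional derivative `D_α f t = λ t^(1-α) f' t`. -/
noncomputable def Dal (γ β ρ δ p q α : ℝ) (f : ℝ → ℝ) : ℝ → ℝ :=
  fun t => vlam γ β ρ δ p q * t ^ (1 - α) * deriv f t

/-- `f` is `k` times α-differentiable. -/
def alphaDiff (γ β ρ δ p q α : ℝ) (k : ℕ) (f : ℝ → ℝ) : Prop :=
  ∀ j < k, DifferentiableOn ℝ ((Dal γ β ρ δ p q α)^[j] f) (Set.Ioi 0)

/-- V-fractional integral `∫_a^b f dω = λ⁻¹ ∫_a^b f x · x^(α-1) dx`. -/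
noncomputable def VInt (γ β ρ δ p q α : ℝ) (a b : ℝ) (f : ℝ → ℝ) : ℝ :=
  (vlam γ β ρ δ p q)⁻¹ * ∫ x in a..b, f x * x ^ (α - 1)

/-- Truncated V-fractional Taylor remainder with `m` terms; `R_{n,f} = Rtay (n+1)`. -/
noncomputable def Rtay (γ β ρ δ p q α : ℝ) (m : ℕ) (f : ℝ → ℝ) (t s : ℝ) : ℝ :=
  f s - ∑ k ∈ Finset.range m,
    ((Dal γ β ρ δ p q α)^[k] f t / (Nat.factorial k : ℝ)) *
      ((s ^ α - t ^ α) / (vlam γ β ρ δ p q * α)) ^ k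

lemma vlam_pos {γ β ρ δ p q : ℝ} (hγ : 0 < γ) (hβ : 0 < β) (hρ : 0 < ρ) (hδ : 0 < δ)
    (hp : 0 < p) (hq : 0 < q) : 0 < vlam γ β ρ δ p q := by
  have h1 := Real.Gamma_pos_of_pos hβ
  have h2 := Real.Gamma_pos_of_pos (add_pos hρ hq)
  have h3 := Real.Gamma_pos_of_pos hρ
  have h4 := Real.Gamma_pos_of_pos (add_pos hγ hβ)
  have h5 := Real.Gamma_pos_of_pos (add_pos hδ hp)
  have h6 := Real.Gamma_pos_of_pos hδ
  exact div_pos (mul_pos h1 (div_pos h2 h3)) (mul_pos h4 (div_pos h5 h6))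

lemma uIcc_subset_Ioi {u v : ℝ} (hu : 0 < u) (hv : 0 < v) : Set.uIcc u v ⊆ Set.Ioi 0 :=
  fun _ hx => lt_of_lt_of_le (lt_min hu hv) hx.1

lemma contOn_rpow (r : ℝ) : ContinuousOn (fun x : ℝ => x ^ r) (Set.Ioi 0) :=
  fun x hx => (Real.continuousAt_rpow_const x r (Or.inl (ne_of_gt hx))).continuousWithinAt

lemma integ_helper {α : ℝ} {g : ℝ → ℝ} {u v : ℝ} (hu : 0 < u) (hv : 0 < v)
    (hg : ContinuousOn g (Set.Ioi 0)) :
    IntervalIntegrable (fun x => g x * x ^ (α - 1)) MeasureTheory.volume u v :=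
  ((hg.mono (uIcc_subset_Ioi hu hv)).mul
    ((contOn_rpow (α - 1)).mono (uIcc_subset_Ioi hu hv))).intervalIntegrable

lemma contOn_Q (α c T : ℝ) (k : ℕ) :
    ContinuousOn (fun s : ℝ => ((T - s ^ α) / c) ^ k) (Set.Ioi 0) :=
  ((continuousOn_const.sub (contOn_rpow α)).div_const c).pow k

lemma contOn_Q' (α c T : ℝ) (k : ℕ) :
    ContinuousOn (fun s : ℝ => ((s ^ α - T) / c) ^ k) (Set.Ioi 0) :=
  (((contOn_rpow α).sub continuousOn_const).div_const c).pow k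

lemma hasDeriv_main {γ β ρ δ p q α : ℝ} (hα : α ≠ 0)
    (hL : vlam γ β ρ δ p q ≠ 0) (g : ℝ → ℝ) (T s : ℝ) (hs : 0 < s)
    (hg : DifferentiableOn ℝ g (Set.Ioi 0)) (k : ℕ) :
    HasDerivAt
      (fun x => g x * ((T ^ α - x ^ α) / (vlam γ β ρ δ p q * α)) ^ (k + 1)
        / (Nat.factorial (k + 1) : ℝ))
      ((Dal γ β ρ δ p q α g s / (Nat.factorial (k + 1) : ℝ)
          * ((T ^ α - s ^ α) / (vlam γ β ρ δ p q * α)) ^ (k + 1)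
        - g s / (Nat.factorial k : ℝ)
          * ((T ^ α - s ^ α) / (vlam γ β ρ δ p q * α)) ^ k)
        * s ^ (α - 1) / vlam γ β ρ δ p q) s := by
  set L := vlam γ β ρ δ p q with hLdef
  have hg' : HasDerivAt g (deriv g s) s :=
    (hg.differentiableAt (Ioi_mem_nhds hs)).hasDerivAt
  have h1 : s ^ (1 - α) * s ^ (α - 1) = 1 := by
    rw [← Real.rpow_add hs]; norm_num
  have hds : Dal γ β ρ δ p q α g s * s ^ (α - 1) / L = deriv g s := by
    simp only [Dal, ← hLdef]
    field_simp
    linear_combination deriv g s * h1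
  have hg2 : HasDerivAt g (Dal γ β ρ δ p q α g s * s ^ (α - 1) / L) s := by
    rw [hds]; exact hg'
  have hpow : HasDerivAt (fun x : ℝ => x ^ α) (α * s ^ (α - 1)) s :=
    Real.hasDerivAt_rpow_const (Or.inl hs.ne')
  have hQ : HasDerivAt (fun x : ℝ => (T ^ α - x ^ α) / (L * α))
      ((0 - α * s ^ (α - 1)) / (L * α)) s :=
    ((hasDerivAt_const s (T ^ α)).sub hpow).div_const _
  have hQk := hQ.pow (k + 1)
  have htot := (hg2.mul hQk).div_const ((Nat.factorial (k + 1) : ℝ))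
  refine htot.congr_deriv ?_
  have hfk : (Nat.factorial k : ℝ) ≠ 0 := Nat.cast_ne_zero.mpr (Nat.factorial_ne_zero k)
  have hfk1 : (Nat.factorial (k + 1) : ℝ) = ((k : ℝ) + 1) * (Nat.factorial k : ℝ) := by
    rw [Nat.factorial_succ]; push_cast; ring
  simp only [Nat.add_sub_cancel, Nat.cast_add, Nat.cast_one, Pi.pow_apply]
  rw [hfk1]
  field_simp
  ring

lemma hasDeriv_simple (L α A v : ℝ) (hα : α ≠ 0) (hL : L ≠ 0) (k : ℕ) (s : ℝ) (hs : 0 < s) :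
    HasDerivAt
      (fun x : ℝ => A / (Nat.factorial (k + 1) : ℝ) * ((x ^ α - v ^ α) / (L * α)) ^ (k + 1))
      ((A / (Nat.factorial k : ℝ) * ((s ^ α - v ^ α) / (L * α)) ^ k) * s ^ (α - 1) / L) s := by
  have hpow : HasDerivAt (fun x : ℝ => x ^ α) (α * s ^ (α - 1)) s :=
    Real.hasDerivAt_rpow_const (Or.inl hs.ne')
  have hQk := (((hpow.sub_const (v ^ α)).div_const (L * α)).pow (k + 1)).const_mul
    (A / (Nat.factorial (k + 1) : ℝ))
  refine hQk.congr_deriv ?_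
  have hfk : (Nat.factorial k : ℝ) ≠ 0 := Nat.cast_ne_zero.mpr (Nat.factorial_ne_zero k)
  have hfk1 : (Nat.factorial (k + 1) : ℝ) = ((k : ℝ) + 1) * (Nat.factorial k : ℝ) := by
    rw [Nat.factorial_succ]; push_cast; ring
  simp only [Nat.add_sub_cancel, Nat.cast_add, Nat.cast_one]
  rw [hfk1]
  field_simp

lemma Rtay_succ (γ β ρ δ p q α : ℝ) (m : ℕ) (f : ℝ → ℝ) (v s : ℝ) :
    Rtay γ β ρ δ p q α (m + 1) f v s =
      Rtay γ β ρ δ p q α m f v s -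
        ((Dal γ β ρ δ p q α)^[m] f v / (Nat.factorial m : ℝ)) *
          ((s ^ α - v ^ α) / (vlam γ β ρ δ p q * α)) ^ m := by
  simp only [Rtay, Finset.sum_range_succ]
  ring

lemma cont_Rtay (γ β ρ δ p q α : ℝ) (m : ℕ) (f : ℝ → ℝ) (v : ℝ)
    (hf : ContinuousOn f (Set.Ioi 0)) :
    ContinuousOn (fun s => Rtay γ β ρ δ p q α m f v s) (Set.Ioi 0) := by
  unfold Rtay
  apply hf.sub
  apply continuousOn_finset_sum
  intro k _
  exact continuousOn_const.mul (contOn_Q' α (vlam γ β ρ δ p q * α) (v ^ α) k)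

lemma aux (γ β ρ δ p q α : ℝ) (hγ : 0 < γ) (hβ : 0 < β) (hρ : 0 < ρ) (hδ : 0 < δ)
    (hp : 0 < p) (hq : 0 < q) (hα : 0 < α)
    (a b : ℝ) (ha : 0 < a) (hab : a ≤ b) (f : ℝ → ℝ) :
    ∀ m : ℕ, alphaDiff γ β ρ δ p q α m f →
      ContinuousOn ((Dal γ β ρ δ p q α)^[m] f) (Set.Ioi 0) →
      ∀ t ∈ Set.Icc a b,
        VInt γ β ρ δ p q α a b (fun s =>
            ((Dal γ β ρ δ p q α)^[m] f s / (Nat.factorial m : ℝ)) *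
              ((t ^ α - s ^ α) / (vlam γ β ρ δ p q * α)) ^ m) =
          VInt γ β ρ δ p q α a t (fun s => Rtay γ β ρ δ p q α m f a s) +
            VInt γ β ρ δ p q α t b (fun s => Rtay γ β ρ δ p q α m f b s) := by
  have hb : 0 < b := lt_of_lt_of_le ha hab
  intro m
  induction m with
  | zero =>
    intro _ hc t ht
    have ht0 : 0 < t := lt_of_lt_of_le ha ht.1
    have hfc : ContinuousOn f (Set.Ioi 0) := by simpa using hc
    simp only [Function.iterate_zero, id_eq, pow_zero, Nat.factorial_zero, Nat.cast_one,
      div_one, mul_one, Rtay, Finset.range_zero, Finset.sum_empty, sub_zero]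
    simp only [VInt]
    rw [← mul_add]
    congr 1
    exact (intervalIntegral.integral_add_adjacent_intervals
      (integ_helper ha ht0 hfc) (integ_helper ht0 hb hfc)).symm
  | succ m ih =>
    intro hd hc t ht
    have ht0 : 0 < t := lt_of_lt_of_le ha ht.1
    have hLne : vlam γ β ρ δ p q ≠ 0 := (vlam_pos hγ hβ hρ hδ hp hq).ne'
    have hαne : α ≠ 0 := ne_of_gt hα
    have hdm : DifferentiableOn ℝ ((Dal γ β ρ δ p q α)^[m] f) (Set.Ioi 0) :=
      hd m (Nat.lt_succ_self m)
    have hcm : ContinuousOn ((Dal γ β ρ δ p q α)^[m] f) (Set.Ioi 0) := hdm.continuousOn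
    have IH := ih (fun j hj => hd j (hj.trans (Nat.lt_succ_self m))) hcm t ht
    have hfc : ContinuousOn f (Set.Ioi 0) := by
      have := (hd 0 (Nat.succ_pos m)).continuousOn
      simpa using this
    have hG1c : ContinuousOn (fun s =>
        ((Dal γ β ρ δ p q α)^[m + 1] f s / (Nat.factorial (m + 1) : ℝ)) *
          ((t ^ α - s ^ α) / (vlam γ β ρ δ p q * α)) ^ (m + 1)) (Set.Ioi 0) :=
      (hc.div_const _).mul (contOn_Q α _ _ _)
    have hG2c : ContinuousOn (fun s =>
        ((Dal γ β ρ δ p q α)^[m] f s / (Nat.factorial m : ℝ)) *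
          ((t ^ α - s ^ α) / (vlam γ β ρ δ p q * α)) ^ m) (Set.Ioi 0) :=
      (hcm.div_const _).mul (contOn_Q α _ _ _)
    have h1int := integ_helper (α := α) ha hb hG1c
    have h2int := integ_helper (α := α) ha hb hG2c
    -- main FTC step on [a, b]
    have key : ∀ s ∈ Set.uIcc a b, HasDerivAt
        (fun x => (Dal γ β ρ δ p q α)^[m] f x *
            ((t ^ α - x ^ α) / (vlam γ β ρ δ p q * α)) ^ (m + 1) / (Nat.factorial (m + 1) : ℝ))
        (((Dal γ β ρ δ p q α)^[m + 1] f s / (Nat.factorial (m + 1) : ℝ) *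
              ((t ^ α - s ^ α) / (vlam γ β ρ δ p q * α)) ^ (m + 1) -
            (Dal γ β ρ δ p q α)^[m] f s / (Nat.factorial m : ℝ) *
              ((t ^ α - s ^ α) / (vlam γ β ρ δ p q * α)) ^ m) *
          s ^ (α - 1) / vlam γ β ρ δ p q) s := by
      intro s hs
      have hs0 : 0 < s := uIcc_subset_Ioi ha hb hs
      have H := hasDeriv_main hαne hLne ((Dal γ β ρ δ p q α)^[m] f) t s hs0 hdm m
      rw [Function.iterate_succ_apply']
      exact H
    have hFint : IntervalIntegrable (fun s =>
        ((Dal γ β ρ δ p q α)^[m + 1] f s / (Nat.factorial (m + 1) : ℝ) *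
            ((t ^ α - s ^ α) / (vlam γ β ρ δ p q * α)) ^ (m + 1) -
          (Dal γ β ρ δ p q α)^[m] f s / (Nat.factorial m : ℝ) *
            ((t ^ α - s ^ α) / (vlam γ β ρ δ p q * α)) ^ m) *
        s ^ (α - 1) / vlam γ β ρ δ p q) MeasureTheory.volume a b :=
      (integ_helper ha hb (hG1c.sub hG2c)).div_const _
    have hFTC := intervalIntegral.integral_eq_sub_of_hasDerivAt key hFint
    have hsub : VInt γ β ρ δ p q α a b (fun s =>
          ((Dal γ β ρ δ p q α)^[m + 1] f s / (Nat.factorial (m + 1) : ℝ)) *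
            ((t ^ α - s ^ α) / (vlam γ β ρ δ p q * α)) ^ (m + 1)) -
        VInt γ β ρ δ p q α a b (fun s =>
          ((Dal γ β ρ δ p q α)^[m] f s / (Nat.factorial m : ℝ)) *
            ((t ^ α - s ^ α) / (vlam γ β ρ δ p q * α)) ^ m) =
        (Dal γ β ρ δ p q α)^[m] f b *
            ((t ^ α - b ^ α) / (vlam γ β ρ δ p q * α)) ^ (m + 1) / (Nat.factorial (m + 1) : ℝ) -
          (Dal γ β ρ δ p q α)^[m] f a *
            ((t ^ α - a ^ α) / (vlam γ β ρ δ p q * α)) ^ (m + 1) / (Nat.factorial (m + 1) : ℝ) := by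
      simp only [VInt]
      rw [← mul_sub, ← intervalIntegral.integral_sub h1int h2int, ← hFTC,
        inv_mul_eq_div, ← intervalIntegral.integral_div]
      apply intervalIntegral.integral_congr
      intro s _
      dsimp only
      ring
    -- split and evaluate the a-side
    have hRaC := cont_Rtay γ β ρ δ p q α m f a hfc
    have hRbC := cont_Rtay γ β ρ δ p q α m f b hfc
    have htermAc : ContinuousOn (fun s =>
        ((Dal γ β ρ δ p q α)^[m] f a / (Nat.factorial m : ℝ)) *
          ((s ^ α - a ^ α) / (vlam γ β ρ δ p q * α)) ^ m) (Set.Ioi 0) :=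
      continuousOn_const.mul (contOn_Q' α _ _ _)
    have htermBc : ContinuousOn (fun s =>
        ((Dal γ β ρ δ p q α)^[m] f b / (Nat.factorial m : ℝ)) *
          ((s ^ α - b ^ α) / (vlam γ β ρ δ p q * α)) ^ m) (Set.Ioi 0) :=
      continuousOn_const.mul (contOn_Q' α _ _ _)
    have hsplitA : VInt γ β ρ δ p q α a t (fun s => Rtay γ β ρ δ p q α (m + 1) f a s) =
        VInt γ β ρ δ p q α a t (fun s => Rtay γ β ρ δ p q α m f a s) -
          VInt γ β ρ δ p q α a t (fun s =>
            ((Dal γ β ρ δ p q α)^[m] f a / (Nat.factorial m : ℝ)) *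
              ((s ^ α - a ^ α) / (vlam γ β ρ δ p q * α)) ^ m) := by
      simp only [VInt]
      rw [← mul_sub, ← intervalIntegral.integral_sub (integ_helper ha ht0 hRaC)
        (integ_helper ha ht0 htermAc)]
      congr 1
      apply intervalIntegral.integral_congr
      intro s _
      dsimp only
      rw [Rtay_succ]
      ring
    have hsplitB : VInt γ β ρ δ p q α t b (fun s => Rtay γ β ρ δ p q α (m + 1) f b s) =
        VInt γ β ρ δ p q α t b (fun s => Rtay γ β ρ δ p q α m f b s) -
          VInt γ β ρ δ p q α t b (fun s =>
            ((Dal γ β ρ δ p q α)^[m] f b / (Nat.factorial m : ℝ)) *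
              ((s ^ α - b ^ α) / (vlam γ β ρ δ p q * α)) ^ m) := by
      simp only [VInt]
      rw [← mul_sub, ← intervalIntegral.integral_sub (integ_helper ht0 hb hRbC)
        (integ_helper ht0 hb htermBc)]
      congr 1
      apply intervalIntegral.integral_congr
      intro s _
      dsimp only
      rw [Rtay_succ]
      ring
    have hvalA : VInt γ β ρ δ p q α a t (fun s =>
          ((Dal γ β ρ δ p q α)^[m] f a / (Nat.factorial m : ℝ)) *
            ((s ^ α - a ^ α) / (vlam γ β ρ δ p q * α)) ^ m) =
        (Dal γ β ρ δ p q α)^[m] f a / (Nat.factorial (m + 1) : ℝ) *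
          ((t ^ α - a ^ α) / (vlam γ β ρ δ p q * α)) ^ (m + 1) := by
      have key2 : ∀ s ∈ Set.uIcc a t, HasDerivAt
          (fun x : ℝ => (Dal γ β ρ δ p q α)^[m] f a / (Nat.factorial (m + 1) : ℝ) *
            ((x ^ α - a ^ α) / (vlam γ β ρ δ p q * α)) ^ (m + 1))
          (((Dal γ β ρ δ p q α)^[m] f a / (Nat.factorial m : ℝ) *
              ((s ^ α - a ^ α) / (vlam γ β ρ δ p q * α)) ^ m) *
            s ^ (α - 1) / vlam γ β ρ δ p q) s :=
        fun s hs => hasDeriv_simple (vlam γ β ρ δ p q) α _ a hαne hLne m s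
          (uIcc_subset_Ioi ha ht0 hs)
      have hint := (integ_helper (α := α) ha ht0 htermAc).div_const (vlam γ β ρ δ p q)
      have hFTC2 := intervalIntegral.integral_eq_sub_of_hasDerivAt key2 hint
      simp only [VInt]
      rw [inv_mul_eq_div, ← intervalIntegral.integral_div, hFTC2]
      simp [sub_self, zero_pow (Nat.succ_ne_zero m)]
    have hvalB : VInt γ β ρ δ p q α t b (fun s =>
          ((Dal γ β ρ δ p q α)^[m] f b / (Nat.factorial m : ℝ)) *
            ((s ^ α - b ^ α) / (vlam γ β ρ δ p q * α)) ^ m) =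
        -((Dal γ β ρ δ p q α)^[m] f b / (Nat.factorial (m + 1) : ℝ) *
          ((t ^ α - b ^ α) / (vlam γ β ρ δ p q * α)) ^ (m + 1)) := by
      have key2 : ∀ s ∈ Set.uIcc t b, HasDerivAt
          (fun x : ℝ => (Dal γ β ρ δ p q α)^[m] f b / (Nat.factorial (m + 1) : ℝ) *
            ((x ^ α - b ^ α) / (vlam γ β ρ δ p q * α)) ^ (m + 1))
          (((Dal γ β ρ δ p q α)^[m] f b / (Nat.factorial m : ℝ) *
              ((s ^ α - b ^ α) / (vlam γ β ρ δ p q * α)) ^ m) *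
            s ^ (α - 1) / vlam γ β ρ δ p q) s :=
        fun s hs => hasDeriv_simple (vlam γ β ρ δ p q) α _ b hαne hLne m s
          (uIcc_subset_Ioi ht0 hb hs)
      have hint := (integ_helper (α := α) ht0 hb htermBc).div_const (vlam γ β ρ δ p q)
      have hFTC2 := intervalIntegral.integral_eq_sub_of_hasDerivAt key2 hint
      simp only [VInt]
      rw [inv_mul_eq_div, ← intervalIntegral.integral_div, hFTC2]
      simp [sub_self, zero_pow (Nat.succ_ne_zero m)]
    linear_combination hsub + IH - hsplitA - hsplitB + hvalA + hvalB

theorem stmt4 (γ β ρ δ p q α : ℝ) (hγ : 0 < γ) (hβ : 0 < β) (hρ : 0 < ρ) (hδ : 0 < δ)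
    (hp : 0 < p) (hq : 0 < q) (hα : 0 < α) (hα1 : α ≤ 1)
    (a b : ℝ) (ha : 0 < a) (hab : a ≤ b)
    (n : ℤ) (hn : -1 ≤ n)
    (f : ℝ → ℝ)
    (hdiff : alphaDiff γ β ρ δ p q α (n + 1).toNat f)
    (hcont : ContinuousOn ((Dal γ β ρ δ p q α)^[(n + 1).toNat] f) (Set.Ioi 0)) :
    ∀ t ∈ Set.Icc a b,
      VInt γ β ρ δ p q α a b (fun s =>
        ((Dal γ β ρ δ p q α)^[(n + 1).toNat] f s / (Nat.factorial (n + 1).toNat : ℝ)) *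
          ((t ^ α - s ^ α) / (vlam γ β ρ δ p q * α)) ^ (n + 1).toNat) =
      VInt γ β ρ δ p q α a t (fun s => Rtay γ β ρ δ p q α (n + 1).toNat f a s) +
        VInt γ β ρ δ p q α t b (fun s => Rtay γ β ρ δ p q α (n + 1).toNat f b s) := by
  intro t ht
  exact aux γ β ρ δ p q α hγ hβ hρ hδ hp hq hα a b ha hab f (n + 1).toNat hdiff hcont t ht
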